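/- arXiv:1303.2564 — 2 statements merged into one kernel-verified Lean document; each statement's English description precedes it below -/
import Mathlib

section
/- For every finite simple graph G, the independence polynomial I(G∘2K_1; x) of the corona of G with the edgeless graph on two vertices is symmetric. -/
open Polynomial Finset
open scoped Classical

/-- A set of vertices is independent if its elements are pairwise non-adjacent. -/
def IsIndepSet {V : Type*} (G : SimpleGraph V) (s : Finset V) : Prop :=
  ∀ u ∈ s, ∀ v ∈ s, u ≠ v → ¬ G.Adj u v

/-- The independence number: maximum cardinality of an independent set. -/
noncomputable def indepNum {V : Type*} [Fintype V] (G : SimpleGraph V) : ℕ :=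
  (Finset.univ.filter (fun s : Finset V => IsIndepSet G s)).sup Finset.card

/-- The number of independent sets of cardinality `k`. -/
noncomputable def indepCount {V : Type*} [Fintype V] (G : SimpleGraph V) (k : ℕ) : ℕ :=
  (Finset.univ.filter (fun s : Finset V => IsIndepSet G s ∧ s.card = k)).card

/-- The independence polynomial `I(G;x) = ∑ s_k x^k`. -/
noncomputable def indepPoly {V : Type*} [Fintype V] (G : SimpleGraph V) : Polynomial ℝ :=
  ∑ k ∈ Finset.range (indepNum G + 1), Polynomial.C (indepCount G k : ℝ) * Polynomial.X ^ k

/-- The corona `G ∘ H`: take `G` together with `|V(G)|` disjoint copies of `H`,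
joining each vertex `v` of `G` to all vertices of the `v`-th copy of `H`. -/
def corona {V W : Type*} (G : SimpleGraph V) (H : SimpleGraph W) :
    SimpleGraph (V ⊕ V × W) where
  Adj x y :=
    match x, y with
    | Sum.inl u, Sum.inl v => G.Adj u v
    | Sum.inl u, Sum.inr (v, _) => u = v
    | Sum.inr (v, _), Sum.inl u => u = v
    | Sum.inr (v, w), Sum.inr (v', w') => v = v' ∧ H.Adj w w'
  symm := by
    constructor
    rintro (u | ⟨v, w⟩) (u' | ⟨v', w'⟩) h
    · exact G.adj_symm h
    · exact h
    · exact h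
    · exact ⟨h.1.symm, H.adj_symm h.2⟩
  loopless := by
    constructor
    rintro (u | ⟨v, w⟩) h
    · exact G.irrefl h
    · exact H.irrefl h.2

/-- The disjoint union of two graphs. -/
def disjUnion {V W : Type*} (G : SimpleGraph V) (H : SimpleGraph W) :
    SimpleGraph (V ⊕ W) where
  Adj x y :=
    match x, y with
    | Sum.inl a, Sum.inl b => G.Adj a b
    | Sum.inr a, Sum.inr b => H.Adj a b
    | _, _ => False
  symm := by
    constructor
    rintro (a | a) (b | b) h
    · exact G.adj_symm h
    · exact h.elim
    · exact h.elim
    · exact H.adj_symm h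
  loopless := by
    constructor
    rintro (a | a) h
    · exact G.irrefl h
    · exact H.irrefl h

/-- The Zykov sum (join) of two graphs. -/
def zykovSum {V W : Type*} (G : SimpleGraph V) (H : SimpleGraph W) :
    SimpleGraph (V ⊕ W) where
  Adj x y :=
    match x, y with
    | Sum.inl a, Sum.inl b => G.Adj a b
    | Sum.inr a, Sum.inr b => H.Adj a b
    | _, _ => True
  symm := by
    constructor
    rintro (a | a) (b | b) h
    · exact G.adj_symm h
    · trivial
    · trivial
    · exact H.adj_symm h
  loopless := by
    constructor
    rintro (a | a) h
    · exact G.irrefl h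
    · exact H.irrefl h

/-- `K_p - e`: the complete graph on `Fin p` minus the edge joining vertices `0` and `1`. -/
def completeMinusEdge (p : ℕ) : SimpleGraph (Fin p) where
  Adj a b := a ≠ b ∧ ¬(a.val ≤ 1 ∧ b.val ≤ 1)
  symm := ⟨fun a b ⟨h1, h2⟩ => ⟨h1.symm, fun ⟨hb, ha⟩ => h2 ⟨ha, hb⟩⟩⟩
  loopless := ⟨fun a ⟨h, _⟩ => h rfl⟩

/-- The clique number of a graph. -/
noncomputable def cliqueNum {V : Type*} [Fintype V] (G : SimpleGraph V) : ℕ :=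
  (Finset.univ.filter (fun s : Finset V => G.IsClique ↑s)).sup Finset.card

/-- A graph is perfect if every induced subgraph has chromatic number
equal to its clique number. -/
def IsPerfect {V : Type*} [Fintype V] (G : SimpleGraph V) : Prop :=
  ∀ s : Set V, (G.induce s).chromaticNumber = (cliqueNum (G.induce s) : ℕ∞)

/-- The coefficient sequence `(a_0, …, a_n)` of a polynomial (indexed up to its
degree `n`) is symmetric, i.e. `a_i = a_{n-i}`. -/
def CoeffSymmetric (P : Polynomial ℝ) : Prop :=
  ∀ i ≤ P.natDegree, P.coeff i = P.coeff (P.natDegree - i)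

/-- The coefficient sequence of a polynomial is unimodal with mode `k`. -/
def IsMode (P : Polynomial ℝ) (k : ℕ) : Prop :=
  k ≤ P.natDegree ∧ (∀ i, i < k → P.coeff i ≤ P.coeff (i + 1)) ∧
    (∀ i, k ≤ i → i < P.natDegree → P.coeff (i + 1) ≤ P.coeff i)

/-- The coefficient sequence of a polynomial is unimodal. -/
def CoeffUnimodal (P : Polynomial ℝ) : Prop :=
  ∃ k, IsMode P k

/-- `k` is the unique index achieving the maximal coefficient of `P`. -/
def IsUniqueMode (P : Polynomial ℝ) (k : ℕ) : Prop :=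
  k ≤ P.natDegree ∧ ∀ j ≤ P.natDegree, j ≠ k → P.coeff j < P.coeff k

/-- The polynomial has a unique mode. -/
def HasUniqueMode (P : Polynomial ℝ) : Prop :=
  ∃ k, IsUniqueMode P k

section Aux

variable {V : Type*} [Fintype V]

/-- The involution on independent sets of `corona G 2K₁`. -/
noncomputable def phiAux (S : Finset (V ⊕ V × Fin 2)) : Finset (V ⊕ V × Fin 2) :=
  Finset.univ.filter (Sum.elim (fun v => Sum.inl v ∈ S)
    (fun p => Sum.inl p.1 ∉ S ∧ Sum.inr p ∉ S))

lemma mem_phiAux_inl {S : Finset (V ⊕ V × Fin 2)} {v : V} :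
    Sum.inl v ∈ phiAux S ↔ Sum.inl v ∈ S := by simp [phiAux]

lemma mem_phiAux_inr {S : Finset (V ⊕ V × Fin 2)} {p : V × Fin 2} :
    Sum.inr p ∈ phiAux S ↔ (Sum.inl p.1 ∉ S ∧ Sum.inr p ∉ S) := by simp [phiAux]

lemma corona_adj_inl_inr (G : SimpleGraph V) (u v : V) (w : Fin 2) :
    (corona G (⊥ : SimpleGraph (Fin 2))).Adj (Sum.inl u) (Sum.inr (v, w)) ↔ u = v :=
  Iff.rfl

lemma corona_adj_inr_inl (G : SimpleGraph V) (u v : V) (w : Fin 2) :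
    (corona G (⊥ : SimpleGraph (Fin 2))).Adj (Sum.inr (v, w)) (Sum.inl u) ↔ u = v :=
  Iff.rfl

lemma inr_mem_not_inl (G : SimpleGraph V) (S : Finset (V ⊕ V × Fin 2))
    (hS : IsIndepSet (corona G (⊥ : SimpleGraph (Fin 2))) S) :
    ∀ v w, Sum.inr (v, w) ∈ S → Sum.inl v ∉ S := by
  intro v w hr hl
  exact hS _ hl _ hr (by simp) ((corona_adj_inl_inr G v v w).mpr rfl)

lemma phiAux_indep (G : SimpleGraph V) (S : Finset (V ⊕ V × Fin 2))
    (hS : IsIndepSet (corona G (⊥ : SimpleGraph (Fin 2))) S) :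
    IsIndepSet (corona G (⊥ : SimpleGraph (Fin 2))) (phiAux S) := by
  rintro (u | ⟨v, w⟩) hu (u' | ⟨v', w'⟩) hv hne hadj
  · exact hS _ (mem_phiAux_inl.mp hu) _ (mem_phiAux_inl.mp hv) hne hadj
  · have h : u = v' := hadj
    exact (mem_phiAux_inr.mp hv).1 (h ▸ mem_phiAux_inl.mp hu)
  · have h : u' = v := hadj
    exact (mem_phiAux_inr.mp hu).1 (h ▸ mem_phiAux_inl.mp hv)
  · have h : v = v' ∧ (⊥ : SimpleGraph (Fin 2)).Adj w w' := hadj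
    exact h.2

lemma phiAux_phiAux (G : SimpleGraph V) (S : Finset (V ⊕ V × Fin 2))
    (hS : IsIndepSet (corona G (⊥ : SimpleGraph (Fin 2))) S) :
    phiAux (phiAux S) = S := by
  ext x
  rcases x with v | ⟨v, w⟩
  · simp [mem_phiAux_inl]
  · have key := inr_mem_not_inl G S hS v w
    simp only [mem_phiAux_inr, mem_phiAux_inl]
    tauto

lemma card_add_phiAux (G : SimpleGraph V) (S : Finset (V ⊕ V × Fin 2))
    (hS : IsIndepSet (corona G (⊥ : SimpleGraph (Fin 2))) S) :
    S.card + (phiAux S).card = 2 * Fintype.card V := by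
  have key := inr_mem_not_inl G S hS
  have h1 : ∀ T : Finset (V ⊕ V × Fin 2),
      T.card = ∑ x : V ⊕ V × Fin 2, if x ∈ T then 1 else 0 := by
    intro T
    conv_lhs => rw [← Finset.filter_univ_mem T]
    rw [Finset.card_filter]
  rw [h1 S, h1 (phiAux S), ← Finset.sum_add_distrib, Fintype.sum_sum_type,
    Fintype.sum_prod_type, ← Finset.sum_add_distrib]
  have hv : ∀ v : V,
      (((if Sum.inl v ∈ S then 1 else 0) + (if Sum.inl v ∈ phiAux S then 1 else 0))
        + ∑ w : Fin 2, ((if Sum.inr (v, w) ∈ S then 1 else 0)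
            + (if Sum.inr (v, w) ∈ phiAux S then 1 else 0))) = 2 := by
    intro v
    rw [Fin.sum_univ_two]
    by_cases h : Sum.inl v ∈ S
    · have h0 : Sum.inr (v, (0 : Fin 2)) ∉ S := fun hc => key v 0 hc h
      have h1' : Sum.inr (v, (1 : Fin 2)) ∉ S := fun hc => key v 1 hc h
      simp [mem_phiAux_inl, mem_phiAux_inr, h, h0, h1']
    · simp only [mem_phiAux_inl, mem_phiAux_inr, h]
      by_cases h0 : Sum.inr (v, (0 : Fin 2)) ∈ S <;>
        by_cases h1' : Sum.inr (v, (1 : Fin 2)) ∈ S <;> simp [h0, h1', h]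
  rw [Finset.sum_congr rfl (fun v _ => hv v), Finset.sum_const, Finset.card_univ,
    smul_eq_mul, mul_comm]

lemma indepNum_corona_2K1 (G : SimpleGraph V) :
    indepNum (corona G (⊥ : SimpleGraph (Fin 2))) = 2 * Fintype.card V := by
  apply le_antisymm
  · apply Finset.sup_le
    intro S hS
    simp only [Finset.mem_filter, Finset.mem_univ, true_and] at hS
    have := card_add_phiAux G S hS
    omega
  · have hmem : (Finset.univ.map ⟨Sum.inr, Sum.inr_injective⟩ : Finset (V ⊕ V × Fin 2)) ∈
        Finset.univ.filter (fun s => IsIndepSet (corona G (⊥ : SimpleGraph (Fin 2))) s) := by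
      simp only [Finset.mem_filter, Finset.mem_univ, true_and]
      intro u hu u' hu' hne hadj
      simp only [Finset.mem_map, Finset.mem_univ, Function.Embedding.coeFn_mk,
        true_and] at hu hu'
      obtain ⟨⟨a1, a2⟩, rfl⟩ := hu
      obtain ⟨⟨b1, b2⟩, rfl⟩ := hu'
      have h : a1 = b1 ∧ (⊥ : SimpleGraph (Fin 2)).Adj a2 b2 := hadj
      exact h.2
    have hle := Finset.le_sup (f := Finset.card) hmem
    have hc : 2 * Fintype.card V =
        (Finset.univ.map ⟨Sum.inr, Sum.inr_injective⟩ : Finset (V ⊕ V × Fin 2)).card := by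
      simp [Fintype.card_prod, mul_comm]
    exact le_trans (le_of_eq hc) hle

lemma indepCount_corona_symm (G : SimpleGraph V) (i : ℕ)
    (hi : i ≤ 2 * Fintype.card V) :
    indepCount (corona G (⊥ : SimpleGraph (Fin 2))) i =
      indepCount (corona G (⊥ : SimpleGraph (Fin 2))) (2 * Fintype.card V - i) := by
  unfold indepCount
  apply Finset.card_bij (fun S _ => phiAux S)
  · intro S hS
    simp only [Finset.mem_filter, Finset.mem_univ, true_and] at hS ⊢
    refine ⟨phiAux_indep G S hS.1, ?_⟩
    have := card_add_phiAux G S hS.1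
    omega
  · intro S hS T hT h
    simp only [Finset.mem_filter, Finset.mem_univ, true_and] at hS hT
    rw [← phiAux_phiAux G S hS.1, ← phiAux_phiAux G T hT.1, h]
  · intro T hT
    simp only [Finset.mem_filter, Finset.mem_univ, true_and] at hT
    refine ⟨phiAux T, ?_, phiAux_phiAux G T hT.1⟩
    simp only [Finset.mem_filter, Finset.mem_univ, true_and]
    refine ⟨phiAux_indep G T hT.1, ?_⟩
    have := card_add_phiAux G T hT.1
    omega

end Aux

/-- `I(G ∘ 2K₁; x)` is symmetric for every graph `G`. -/
theorem corona_2K1_symmetric {V : Type*} [Fintype V] (G : SimpleGraph V) :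
    ∀ i ≤ indepNum (corona G (⊥ : SimpleGraph (Fin 2))) / 2,
      indepCount (corona G (⊥ : SimpleGraph (Fin 2))) i =
        indepCount (corona G (⊥ : SimpleGraph (Fin 2)))
          (indepNum (corona G (⊥ : SimpleGraph (Fin 2))) - i) := by
  intro i hi
  rw [indepNum_corona_2K1] at hi ⊢
  exact indepCount_corona_symm G i (by omega)
end

section
/- Let G be a finite simple graph of order n ≥ 1 with independence polynomial I(G;x) = Σ_{k=0}^{α(G)} s_k x^k, and let H be any finite simple graph. Then I(G∘H; x) = Σ_{k=0}^{α(G)} s_k · x^k · I(H;x)^{n−k}; equivalently, I(G∘H;x) = I(H;x)^n · I(G; x / I(H;x)) as rational functions. -/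
open Polynomial Finset
open scoped Classical

/-! ### Auxiliary machinery for Gutman's corona formula -/

/-- The finset of all independent sets of `G`. -/
noncomputable def indepSets {V : Type*} [Fintype V] (G : SimpleGraph V) : Finset (Finset V) :=
  Finset.univ.filter (fun s => IsIndepSet G s)

/-- The independence polynomial written as a sum over all independent sets. -/
noncomputable def fullPoly {V : Type*} [Fintype V] (G : SimpleGraph V) : Polynomial ℝ :=
  ∑ s ∈ indepSets G, (Polynomial.X : Polynomial ℝ) ^ s.card

lemma card_le_indepNum {V : Type*} [Fintype V] {G : SimpleGraph V} {s : Finset V}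
    (hs : s ∈ indepSets G) : s.card ≤ indepNum G :=
  Finset.le_sup hs

lemma indepNum_le_card {V : Type*} [Fintype V] (G : SimpleGraph V) :
    indepNum G ≤ Fintype.card V := by
  refine Finset.sup_le fun s _ => ?_
  simpa using Finset.card_le_card (Finset.subset_univ s)

/-- Grouping a sum over a finset of finsets by cardinality. -/
lemma sum_card_group {V : Type*} [Fintype V] (S : Finset (Finset V)) (N : ℕ)
    (hN : ∀ s ∈ S, s.card ≤ N) (f : ℕ → Polynomial ℝ) :
    ∑ s ∈ S, f s.card
      = ∑ k ∈ Finset.range (N + 1),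
          Polynomial.C (((S.filter (fun s => s.card = k)).card : ℝ)) * f k := by
  rw [← Finset.sum_fiberwise_of_maps_to (g := Finset.card) (t := Finset.range (N + 1))
        (fun s hs => Finset.mem_range.2 (Nat.lt_succ_of_le (hN s hs)))]
  refine Finset.sum_congr rfl fun k _ => ?_
  rw [Finset.sum_congr rfl (fun s hs => by rw [(Finset.mem_filter.1 hs).2]),
    Finset.sum_const, nsmul_eq_mul]
  simp

lemma fullPoly_eq {V : Type*} [Fintype V] (G : SimpleGraph V) : fullPoly G = indepPoly G := by
  rw [fullPoly, sum_card_group (indepSets G) (indepNum G) (fun s hs => card_le_indepNum hs)]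
  refine Finset.sum_congr rfl fun k _ => ?_
  congr 3
  rw [indepCount, indepSets, Finset.filter_filter]

/-- The fibers of `B` over `V` are independent sets of `H`. -/
def FibIndep {V W : Type*} (H : SimpleGraph W) (B : Finset (V × W)) : Prop :=
  ∀ v w w', (v, w) ∈ B → (v, w') ∈ B → ¬ H.Adj w w'

/-- The finset of subsets of `V × W` supported over `T` with all fibers independent. -/
noncomputable def FB {V W : Type*} [Fintype V] [Fintype W] (H : SimpleGraph W) (T : Finset V) :
    Finset (Finset (V × W)) :=
  Finset.univ.filter (fun B => (∀ q ∈ B, q.1 ∈ T) ∧ FibIndep H B)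

lemma mem_FB {V W : Type*} [Fintype V] [Fintype W] {H : SimpleGraph W} {T : Finset V}
    {B : Finset (V × W)} :
    B ∈ FB H T ↔ (∀ q ∈ B, q.1 ∈ T) ∧ FibIndep H B := by
  simp [FB]

lemma FB_sum {V W : Type*} [Fintype V] [Fintype W] (H : SimpleGraph W) (T : Finset V) :
    ∑ B ∈ FB H T, (Polynomial.X : Polynomial ℝ) ^ B.card = fullPoly H ^ T.card := by
  induction T using Finset.induction with
  | empty =>
      have h1 : FB H (∅ : Finset V) = {∅} := by
        ext B
        simp only [mem_FB, Finset.mem_singleton, Finset.notMem_empty]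
        constructor
        · rintro ⟨h, -⟩
          exact Finset.eq_empty_iff_forall_notMem.2 fun q hq => h q hq
        · rintro rfl
          exact ⟨fun q hq => absurd hq (Finset.notMem_empty q),
            fun v w w' hw _ => absurd hw (Finset.notMem_empty _)⟩
      rw [h1]; simp
  | @insert a T ha ih =>
      rw [Finset.card_insert_of_notMem ha, pow_succ, ← ih]
      rw [fullPoly, Finset.sum_mul_sum, ← Finset.sum_product']
      refine Finset.sum_nbij'
        (i := fun B => (B.filter (fun q => q.1 ≠ a),
          (B.filter (fun q => q.1 = a)).image Prod.snd))
        (j := fun p => p.2.image (fun w => (a, w)) ∪ p.1) ?_ ?_ ?_ ?_ ?_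
      · -- i maps into the product
        intro B hB
        rw [mem_FB] at hB
        rw [Finset.mem_product]
        constructor
        · rw [mem_FB]
          constructor
          · intro q hq
            rw [Finset.mem_filter] at hq
            rcases Finset.mem_insert.1 (hB.1 _ hq.1) with h | h
            · exact absurd h hq.2
            · exact h
          · intro v w w' hw hw'
            exact hB.2 v w w' (Finset.mem_filter.1 hw).1 (Finset.mem_filter.1 hw').1
        · rw [indepSets, Finset.mem_filter]
          refine ⟨Finset.mem_univ _, ?_⟩
          intro w hw w' hw' hne
          simp only [Finset.mem_image, Finset.mem_filter] at hw hw'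
          obtain ⟨⟨v1, wa⟩, ⟨hq1, hq1a⟩, rfl⟩ := hw
          obtain ⟨⟨v2, wb⟩, ⟨hq2, hq2a⟩, rfl⟩ := hw'
          dsimp at hq1a hq2a
          subst hq1a; subst hq2a
          exact hB.2 _ _ _ hq1 hq2
      · -- j maps into FB H (insert a T)
        rintro ⟨B, t⟩ hp
        dsimp only
        rw [Finset.mem_product] at hp
        obtain ⟨hB, ht⟩ := hp
        rw [mem_FB] at hB
        have htI : IsIndepSet H t := (Finset.mem_filter.1 ht).2
        rw [mem_FB]
        constructor
        · rintro ⟨v, w⟩ hq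
          rcases Finset.mem_union.1 hq with h | h
          · simp only [Finset.mem_image, Prod.mk.injEq] at h
            obtain ⟨w', _, rfl, rfl⟩ := h
            exact Finset.mem_insert_self a T
          · exact Finset.mem_insert_of_mem (hB.1 _ h)
        · intro v w w' hw hw'
          rcases Finset.mem_union.1 hw with h | h <;> rcases Finset.mem_union.1 hw' with h' | h'
          · simp only [Finset.mem_image, Prod.mk.injEq] at h h'
            obtain ⟨w1, hw1, rfl, rfl⟩ := h
            obtain ⟨w2, hw2, h2a, rfl⟩ := h'
            by_cases hww : w1 = w2
            · subst hww; exact H.irrefl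
            · exact htI _ hw1 _ hw2 hww
          · exfalso
            simp only [Finset.mem_image, Prod.mk.injEq] at h
            obtain ⟨w1, _, rfl, rfl⟩ := h
            exact ha (hB.1 _ h')
          · exfalso
            simp only [Finset.mem_image, Prod.mk.injEq] at h'
            obtain ⟨w1, _, rfl, rfl⟩ := h'
            exact ha (hB.1 _ h)
          · exact hB.2 v w w' h h'
      · -- left inverse : j (i B) = B
        intro B hB
        dsimp only
        rw [mem_FB] at hB
        ext ⟨qv, qw⟩
        simp only [Finset.mem_union, Finset.mem_image, Finset.mem_filter, Prod.mk.injEq]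
        constructor
        · rintro (⟨w, ⟨⟨v', w'⟩, ⟨hq', hv'⟩, hw'⟩, rfl, rfl⟩ | ⟨hq, -⟩)
          · dsimp at hv' hw'; subst hv'; subst hw'; exact hq'
          · exact hq
        · intro hq
          by_cases hqa : qv = a
          · exact Or.inl ⟨qw, ⟨(qv, qw), ⟨hq, hqa⟩, rfl⟩, hqa.symm, rfl⟩
          · exact Or.inr ⟨hq, hqa⟩
      · -- right inverse : i (j p) = p
        rintro ⟨B, t⟩ hp
        dsimp only
        rw [Finset.mem_product] at hp
        obtain ⟨hB, _⟩ := hp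
        rw [mem_FB] at hB
        have hBa : ∀ q ∈ B, q.1 ≠ a := fun q hq hqa => ha (hqa ▸ hB.1 q hq)
        refine Prod.ext ?_ ?_
        · ext ⟨qv, qw⟩
          simp only [Finset.mem_filter, Finset.mem_union, Finset.mem_image, Prod.mk.injEq]
          constructor
          · rintro ⟨h | h, hq⟩
            · exfalso; obtain ⟨w', _, rfl, -⟩ := h; exact hq rfl
            · exact h
          · intro h
            exact ⟨Or.inr h, hBa _ h⟩
        · ext w
          simp only [Finset.mem_image, Finset.mem_filter, Finset.mem_union, Prod.mk.injEq]
          constructor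
          · rintro ⟨⟨v, w'⟩, ⟨h | h, hva⟩, rfl⟩
            · obtain ⟨w2, hw2, rfl, rfl⟩ := h; exact hw2
            · exact absurd hva (hBa _ h)
          · intro hw
            exact ⟨(a, w), ⟨Or.inl ⟨w, hw, rfl⟩, rfl⟩, rfl⟩
      · -- values agree
        intro B hB
        dsimp only
        rw [← pow_add]
        congr 1
        have himg : #((B.filter (fun q => q.1 = a)).image Prod.snd)
            = #(B.filter (fun q => q.1 = a)) := by
          refine Finset.card_image_of_injOn ?_
          rintro ⟨v1, w1⟩ h1 ⟨v2, w2⟩ h2 hw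
          rw [Finset.mem_coe, Finset.mem_filter] at h1 h2
          dsimp at h1 h2 hw
          rw [Prod.mk.injEq]
          exact ⟨h1.2.trans h2.2.symm, hw⟩
        have hc := Finset.card_filter_add_card_filter_not (s := B)
          (p := fun q => q.1 ≠ a)
        simp only [not_not] at hc
        rw [himg]
        omega

lemma corona_indep_iff {V W : Type*} (G : SimpleGraph V) (H : SimpleGraph W)
    (s : Finset (V ⊕ V × W)) :
    IsIndepSet (corona G H) s ↔
      IsIndepSet G s.toLeft ∧ FibIndep H s.toRight ∧ ∀ q ∈ s.toRight, q.1 ∉ s.toLeft := by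
  constructor
  · intro h
    refine ⟨?_, ?_, ?_⟩
    · intro u hu v hv huv hadj
      exact h (Sum.inl u) (Finset.mem_toLeft.1 hu) (Sum.inl v) (Finset.mem_toLeft.1 hv)
        (fun he => huv (Sum.inl_injective he)) hadj
    · rintro v w w' hw hw' hadj
      have hne : w ≠ w' := hadj.ne
      exact h (Sum.inr (v, w)) (Finset.mem_toRight.1 hw) (Sum.inr (v, w'))
        (Finset.mem_toRight.1 hw') (by simp [hne]) ⟨rfl, hadj⟩
    · rintro ⟨v, w⟩ hq hv
      exact h (Sum.inl v) (Finset.mem_toLeft.1 hv) (Sum.inr (v, w))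
        (Finset.mem_toRight.1 hq) (by simp) rfl
  · rintro ⟨h1, h2, h3⟩ x hx y hy hxy hadj
    match x, y with
    | Sum.inl u, Sum.inl v =>
        exact h1 u (Finset.mem_toLeft.2 hx) v (Finset.mem_toLeft.2 hy)
          (fun he => hxy (he ▸ rfl)) hadj
    | Sum.inl u, Sum.inr (v, w) =>
        have huv : u = v := hadj
        exact h3 (v, w) (Finset.mem_toRight.2 hy) (huv ▸ Finset.mem_toLeft.2 hx)
    | Sum.inr (v, w), Sum.inl u =>
        have huv : u = v := hadj
        exact h3 (v, w) (Finset.mem_toRight.2 hx) (huv ▸ Finset.mem_toLeft.2 hy)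
    | Sum.inr (v, w), Sum.inr (v', w') =>
        obtain ⟨rfl, hadj'⟩ := (hadj : v = v' ∧ H.Adj w w')
        exact h2 v w w' (Finset.mem_toRight.2 hx) (Finset.mem_toRight.2 hy) hadj'

lemma fullPoly_corona {V W : Type*} [Fintype V] [Fintype W]
    (G : SimpleGraph V) (H : SimpleGraph W) :
    fullPoly (corona G H) =
      ∑ A ∈ indepSets G,
        (Polynomial.X : Polynomial ℝ) ^ A.card * fullPoly H ^ (Fintype.card V - A.card) := by
  have hmap : ∀ s ∈ indepSets (corona G H), s.toLeft ∈ indepSets G := by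
    intro s hs
    rw [indepSets, Finset.mem_filter] at hs ⊢
    exact ⟨Finset.mem_univ _, ((corona_indep_iff G H s).1 hs.2).1⟩
  rw [fullPoly, ← Finset.sum_fiberwise_of_maps_to hmap]
  refine Finset.sum_congr rfl fun A hA => ?_
  have hAcard : (Finset.univ \ A).card = Fintype.card V - A.card := by
    rw [Finset.card_sdiff_of_subset (Finset.subset_univ A), Finset.card_univ]
  rw [← hAcard, ← FB_sum H (Finset.univ \ A), Finset.mul_sum]
  have hAI : IsIndepSet G A := (Finset.mem_filter.1 hA).2
  refine Finset.sum_nbij' (i := Finset.toRight) (j := fun B => A.disjSum B) ?_ ?_ ?_ ?_ ?_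
  · intro s hs
    rw [Finset.mem_filter, indepSets, Finset.mem_filter] at hs
    obtain ⟨⟨-, hsI⟩, hsA⟩ := hs
    rw [corona_indep_iff] at hsI
    rw [mem_FB]
    refine ⟨fun q hq => ?_, hsI.2.1⟩
    rw [Finset.mem_sdiff]
    exact ⟨Finset.mem_univ _, fun hqA => hsI.2.2 q hq (hsA ▸ hqA)⟩
  · intro B hB
    rw [mem_FB] at hB
    rw [Finset.mem_filter, indepSets, Finset.mem_filter]
    refine ⟨⟨Finset.mem_univ _, ?_⟩, Finset.toLeft_disjSum⟩
    rw [corona_indep_iff, Finset.toLeft_disjSum, Finset.toRight_disjSum]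
    exact ⟨hAI, hB.2, fun q hq hqA => (Finset.mem_sdiff.1 (hB.1 q hq)).2 hqA⟩
  · intro s hs
    rw [Finset.mem_filter] at hs
    show A.disjSum s.toRight = s
    rw [← hs.2]
    exact Finset.toLeft_disjSum_toRight
  · intro B hB
    exact Finset.toRight_disjSum
  · intro s hs
    rw [Finset.mem_filter] at hs
    rw [← hs.2, ← pow_add, Finset.card_toLeft_add_card_toRight]
/-- Gutman's formula:
`I(G∘H; x) = Σ_{k=0}^{α(G)} s_k x^k I(H;x)^{n-k}`, equivalently
`I(G∘H;x) = I(H;x)ⁿ · I(G; x / I(H;x))` wherever `I(H;x) ≠ 0`. -/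
theorem corona_indepPoly_formula {V W : Type*} [Fintype V] [Fintype W]
    (G : SimpleGraph V) (H : SimpleGraph W) (n : ℕ) (hn : Fintype.card V = n)
    (hn1 : 1 ≤ n) :
    (indepPoly (corona G H) =
        ∑ k ∈ Finset.range (indepNum G + 1),
          Polynomial.C (indepCount G k : ℝ) * Polynomial.X ^ k *
            indepPoly H ^ (n - k)) ∧
      (∀ x : ℝ, (indepPoly H).eval x ≠ 0 →
        (indepPoly (corona G H)).eval x =
          ((indepPoly H).eval x) ^ n *
            (indepPoly G).eval (x / (indepPoly H).eval x)) := by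
  have hα : indepNum G ≤ n := hn ▸ indepNum_le_card G
  have hcount : ∀ k, ((indepSets G).filter (fun s => s.card = k)).card = indepCount G k := by
    intro k; rw [indepCount, indepSets, Finset.filter_filter]
  have h1 : indepPoly (corona G H) =
      ∑ k ∈ Finset.range (indepNum G + 1),
        Polynomial.C (indepCount G k : ℝ) * Polynomial.X ^ k * indepPoly H ^ (n - k) := by
    rw [← fullPoly_eq, fullPoly_corona, hn,
      sum_card_group (indepSets G) (indepNum G) (fun s hs => card_le_indepNum hs)
        (f := fun k => (Polynomial.X : Polynomial ℝ) ^ k * fullPoly H ^ (n - k))]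
    refine Finset.sum_congr rfl fun k _ => ?_
    rw [hcount, fullPoly_eq, ← mul_assoc]
  refine ⟨h1, fun x hx => ?_⟩
  set h : ℝ := (indepPoly H).eval x with hh
  have hG : (indepPoly G).eval (x / h) = ∑ k ∈ Finset.range (indepNum G + 1),
      (indepCount G k : ℝ) * (x / h) ^ k := by
    rw [indepPoly, Polynomial.eval_finset_sum]
    simp
  rw [h1, Polynomial.eval_finset_sum, hG, Finset.mul_sum]
  refine Finset.sum_congr rfl fun k hk => ?_
  have hk' : k ≤ n := le_trans (Nat.lt_succ_iff.1 (Finset.mem_range.1 hk)) hα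
  have hpow : h ^ (n - k) * h ^ k = h ^ n := pow_sub_mul_pow h hk'
  simp only [Polynomial.eval_mul, Polynomial.eval_pow, Polynomial.eval_C, Polynomial.eval_X]
  rw [div_pow]
  field_simp
  linear_combination ((indepCount G k : ℝ) * x ^ k) * hpow
end
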